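/- On a spherically symmetric tree with branching numbers k: ℕ₀ → ℕ, spherically symmetric decreasing measure m and increasing k, with α(n) = m(n+1)^{1/p}/(k(n+1)+1)^{1/p}, the p-intrinsic path metric d_w has nonempty Cauchy boundary if and only if ∑_n α(n) < ∞; and in that case the (truncated) distance to the boundary of a vertex x at combinatorial distance n from the root equals ∑_{k=n}^∞ α(k). -/

import Mathlib

open ENNReal SimpleGraph

/-- The `w`-length of a walk in a simple graph. -/
noncomputable def walkLength {X : Type*} {G : SimpleGraph X} (w : X → X → ℝ) {x y : X}
    (q : G.Walk x y) : ℝ :=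
  (q.darts.map fun d => w d.toProd.1 d.toProd.2).sum

lemma walkLength_nil {X : Type*} {G : SimpleGraph X} (w : X → X → ℝ) (x : X) :
    walkLength w (Walk.nil : G.Walk x x) = 0 := by simp [walkLength]

lemma walkLength_cons {X : Type*} {G : SimpleGraph X} (w : X → X → ℝ) {x y z : X}
    (h : G.Adj x y) (q : G.Walk y z) :
    walkLength w (Walk.cons h q) = w x y + walkLength w q := by simp [walkLength]

lemma walkLength_nonneg {X : Type*} {G : SimpleGraph X} {w : X → X → ℝ}
    (hw : ∀ x y, 0 ≤ w x y) {x y : X} (q : G.Walk x y) :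
    0 ≤ walkLength w q := by
  induction q with
  | nil => simp [walkLength_nil]
  | cons h q ih => rw [walkLength_cons]; exact add_nonneg (hw _ _) ih

lemma tree_adj_level {X : Type*} {G : SimpleGraph X} (hT : G.IsTree) (o : X) {x y : X}
    (h : G.Adj x y) :
    G.dist o y = G.dist o x + 1 ∨ G.dist o x = G.dist o y + 1 := by
  classical
  have hc := hT.isConnected
  have h1 : G.dist o y ≤ G.dist o x + 1 := by
    calc G.dist o y ≤ G.dist o x + G.dist x y := hc.dist_triangle
    _ ≤ G.dist o x + 1 :=
        Nat.add_le_add_left (by simpa using G.dist_le (Walk.cons h Walk.nil)) _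
  have h2 : G.dist o x ≤ G.dist o y + 1 := by
    calc G.dist o x ≤ G.dist o y + G.dist y x := hc.dist_triangle
    _ ≤ G.dist o y + 1 :=
        Nat.add_le_add_left (by simpa using G.dist_le (Walk.cons h.symm Walk.nil)) _
  have hne : G.dist o x ≠ G.dist o y := by
    intro heq
    obtain ⟨p, hp, hplen⟩ := hc.exists_path_of_dist o x
    by_cases hy : y ∈ p.support
    · have ht := G.dist_le (p.takeUntil y hy)
      have hd := G.dist_le (p.dropUntil y hy)
      have hsum := congrArg Walk.length (p.take_spec hy)
      rw [Walk.length_append] at hsum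
      have h3 : G.dist o x ≤ G.dist o y + G.dist y x := hc.dist_triangle
      have h5 : 0 < G.dist y x := hc.pos_dist_of_ne (h.symm.ne)
      omega
    · obtain ⟨q, hq, hqlen⟩ := hc.exists_path_of_dist o y
      have hpc : (p.concat h).IsPath := by
        rw [Walk.isPath_def, Walk.support_concat,
          List.nodup_append]
        exact ⟨hp.support_nodup, List.nodup_singleton y, by
          rintro a ha b hb rfl; rw [List.mem_singleton] at hb; subst hb; exact hy ha⟩
      have heqq : p.concat h = q := by
        have hac := hT.IsAcyclic
        rw [isAcyclic_iff_path_unique] at hac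
        have := hac ⟨p.concat h, hpc⟩ ⟨q, hq⟩
        simpa using congrArg Subtype.val this
      have := congrArg Walk.length heqq
      rw [Walk.length_concat] at this
      omega
  omega

lemma deg_split {X : Type*} {G : SimpleGraph X} (hT : G.IsTree)
    (hlf : ∀ x : X, (G.neighborSet x).Finite) (o : X) (k : ℕ → ℕ)
    (hdeg_out : ∀ x : X,
      (G.neighborSet x ∩ {y | G.dist o y = G.dist o x + 1}).ncard = k (G.dist o x))
    (hdeg_in : ∀ x : X, x ≠ o →
      (G.neighborSet x ∩ {y | G.dist o y + 1 = G.dist o x}).ncard = 1)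
    (x : X) :
    (G.neighborSet x).ncard
      = k (G.dist o x) + (G.neighborSet x ∩ {y | G.dist o y + 1 = G.dist o x}).ncard := by
  classical
  set A := G.neighborSet x ∩ {y | G.dist o y = G.dist o x + 1} with hA
  set B := G.neighborSet x ∩ {y | G.dist o y + 1 = G.dist o x} with hB
  have hsplit : G.neighborSet x = A ∪ B := by
    ext y
    constructor
    · intro hy
      rcases tree_adj_level hT o ((G.mem_neighborSet x y).mp hy) with h | h
      · exact Or.inl ⟨hy, h⟩
      · exact Or.inr ⟨hy, h.symm⟩
    · rintro (⟨hy, _⟩ | ⟨hy, _⟩) <;> exact hy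
  have hdisj : Disjoint A B := by
    rw [Set.disjoint_left]
    rintro y ⟨_, h1⟩ ⟨_, h2⟩
    simp only [Set.mem_setOf_eq] at h1 h2
    omega
  have hAfin : A.Finite := (hlf x).subset (Set.inter_subset_left)
  have hBfin : B.Finite := (hlf x).subset (Set.inter_subset_left)
  rw [hsplit, Set.ncard_union_eq hdisj hAfin hBfin, hdeg_out x]

lemma deg_ne_root {X : Type*} {G : SimpleGraph X} (hT : G.IsTree)
    (hlf : ∀ x : X, (G.neighborSet x).Finite) (o : X) (k : ℕ → ℕ)
    (hdeg_out : ∀ x : X,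
      (G.neighborSet x ∩ {y | G.dist o y = G.dist o x + 1}).ncard = k (G.dist o x))
    (hdeg_in : ∀ x : X, x ≠ o →
      (G.neighborSet x ∩ {y | G.dist o y + 1 = G.dist o x}).ncard = 1)
    (x : X) (hx : x ≠ o) :
    (G.neighborSet x).ncard = k (G.dist o x) + 1 := by
  rw [deg_split hT hlf o k hdeg_out hdeg_in x, hdeg_in x hx]

lemma deg_root {X : Type*} {G : SimpleGraph X} (hT : G.IsTree)
    (hlf : ∀ x : X, (G.neighborSet x).Finite) (o : X) (k : ℕ → ℕ)
    (hdeg_out : ∀ x : X,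
      (G.neighborSet x ∩ {y | G.dist o y = G.dist o x + 1}).ncard = k (G.dist o x))
    (hdeg_in : ∀ x : X, x ≠ o →
      (G.neighborSet x ∩ {y | G.dist o y + 1 = G.dist o x}).ncard = 1) :
    (G.neighborSet o).ncard = k 0 := by
  have h := deg_split hT hlf o k hdeg_out hdeg_in o
  have hBempty : (G.neighborSet o ∩ {y | G.dist o y + 1 = G.dist o o}) = (∅ : Set X) := by
    ext y
    simp [SimpleGraph.dist_self]
  rw [hBempty] at h
  simpa [SimpleGraph.dist_self] using h

lemma edge_weight {X : Type*} {G : SimpleGraph X} (hT : G.IsTree)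
    (hlf : ∀ x : X, (G.neighborSet x).Finite) (o : X) {p : ℝ} (hp : 1 < p)
    (k : ℕ → ℕ) (hk_pos : ∀ n, 0 < k n) (hk_mono : Monotone k)
    (mu : ℕ → ℝ) (hmu_pos : ∀ n, 0 < mu n) (hmu_dec : Antitone mu)
    (m : X → ℝ) (hm : ∀ x, m x = mu (G.dist o x))
    (hdeg_out : ∀ x : X,
      (G.neighborSet x ∩ {y | G.dist o y = G.dist o x + 1}).ncard = k (G.dist o x))
    (hdeg_in : ∀ x : X, x ≠ o →
      (G.neighborSet x ∩ {y | G.dist o y + 1 = G.dist o x}).ncard = 1)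
    (w : X → X → ℝ)
    (hw : ∀ x y, w x y =
      min ((m x) ^ (1 / p) / ((G.neighborSet x).ncard : ℝ) ^ (1 / p))
          ((m y) ^ (1 / p) / ((G.neighborSet y).ncard : ℝ) ^ (1 / p)))
    (α : ℕ → ℝ)
    (hα : ∀ n, α n = (mu (n + 1)) ^ (1 / p) / ((k (n + 1) : ℝ) + 1) ^ (1 / p))
    (x y : X) (hadj : G.Adj x y) (hlev : G.dist o y = G.dist o x + 1) :
    w x y = α (G.dist o x) := by
  have hz : (0:ℝ) < 1 / p := by positivity
  set l := G.dist o x with hl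
  have hyo : y ≠ o := by
    intro hyo; subst hyo
    simp [SimpleGraph.dist_self] at hlev
  have hdy : (G.neighborSet y).ncard = k (l + 1) + 1 := by
    rw [deg_ne_root hT hlf o k hdeg_out hdeg_in y hyo, hlev]
  have hmy : m y = mu (l + 1) := by rw [hm, hlev]
  have hsecond : (m y) ^ (1/p) / ((G.neighborSet y).ncard : ℝ) ^ (1/p) = α l := by
    rw [hα, hmy, hdy]
    push_cast
    ring_nf
  -- dx ≤ k (l+1) + 1
  have hdx : ((G.neighborSet x).ncard : ℝ) ≤ ((k (l + 1) : ℝ) + 1) := by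
    by_cases hxo : x = o
    · rw [hxo, deg_root hT hlf o k hdeg_out hdeg_in]
      have h0 : (k 0 : ℝ) ≤ (k (l + 1) : ℝ) := by exact_mod_cast hk_mono (Nat.zero_le _)
      linarith
    · rw [deg_ne_root hT hlf o k hdeg_out hdeg_in x hxo, ← hl]
      have h0 : (k l : ℝ) ≤ (k (l + 1) : ℝ) := by exact_mod_cast hk_mono (Nat.le_succ _)
      push_cast
      linarith
  have hdxpos : (0:ℝ) < ((G.neighborSet x).ncard : ℝ) := by
    by_cases hxo : x = o
    · rw [hxo, deg_root hT hlf o k hdeg_out hdeg_in]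
      exact_mod_cast hk_pos 0
    · rw [deg_ne_root hT hlf o k hdeg_out hdeg_in x hxo]
      positivity
  have hmx : m x = mu l := by rw [hm]
  have hfirst_ge : (m y) ^ (1/p) / ((G.neighborSet y).ncard : ℝ) ^ (1/p)
      ≤ (m x) ^ (1/p) / ((G.neighborSet x).ncard : ℝ) ^ (1/p) := by
    rw [hmy, hmx, hdy]
    have h1 : (mu (l+1)) ^ (1/p) ≤ (mu l) ^ (1/p) :=
      Real.rpow_le_rpow (le_of_lt (hmu_pos _)) (hmu_dec (Nat.le_succ _)) hz.le
    have h2 : ((G.neighborSet x).ncard : ℝ) ^ (1/p) ≤ ((k (l+1) + 1 : ℕ) : ℝ) ^ (1/p) := by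
      apply Real.rpow_le_rpow (le_of_lt hdxpos) _ hz.le
      push_cast
      exact hdx
    have h3 : (0:ℝ) < ((G.neighborSet x).ncard : ℝ) ^ (1/p) :=
      Real.rpow_pos_of_pos hdxpos _
    exact div_le_div₀ (Real.rpow_nonneg (le_of_lt (hmu_pos _)) _) h1 h3 h2
  rw [hw, min_eq_right hfirst_ge, hsecond]
lemma sphere_finite {X : Type*} {G : SimpleGraph X} (hT : G.IsTree)
    (hlf : ∀ x : X, (G.neighborSet x).Finite) (o : X)
    (hdeg_in : ∀ x : X, x ≠ o →
      (G.neighborSet x ∩ {y | G.dist o y + 1 = G.dist o x}).ncard = 1) :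
    ∀ n : ℕ, {x : X | G.dist o x = n}.Finite := by
  intro n
  induction n with
  | zero =>
    apply Set.Finite.subset (Set.finite_singleton o)
    intro x hx
    simp only [Set.mem_setOf_eq] at hx
    have := (hT.isConnected.dist_eq_zero_iff (u := o) (v := x)).mp hx
    simp [this.symm]
  | succ n ih =>
    apply Set.Finite.subset ((ih.biUnion (fun z _ => hlf z)))
    intro x hx
    simp only [Set.mem_setOf_eq] at hx
    have hxo : x ≠ o := by
      intro hxo; subst hxo
      simp [SimpleGraph.dist_self] at hx
    have hne : (G.neighborSet x ∩ {y | G.dist o y + 1 = G.dist o x}).Nonempty := by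
      apply Set.nonempty_of_ncard_ne_zero
      rw [hdeg_in x hxo]; exact one_ne_zero
    obtain ⟨z, hz1, hz2⟩ := hne
    simp only [Set.mem_setOf_eq] at hz2
    refine Set.mem_biUnion (show z ∈ {x : X | G.dist o x = n} from ?_) ?_
    · simp only [Set.mem_setOf_eq]; omega
    · exact ((G.mem_neighborSet x z).mp hz1).symm

lemma ball_finite {X : Type*} {G : SimpleGraph X} (hT : G.IsTree)
    (hlf : ∀ x : X, (G.neighborSet x).Finite) (o : X)
    (hdeg_in : ∀ x : X, x ≠ o →
      (G.neighborSet x ∩ {y | G.dist o y + 1 = G.dist o x}).ncard = 1) :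
    ∀ R : ℕ, {x : X | G.dist o x ≤ R}.Finite := by
  intro R
  have : {x : X | G.dist o x ≤ R} = ⋃ n ∈ Finset.range (R+1), {x : X | G.dist o x = n} := by
    ext x; simp [Nat.lt_succ_iff]
  rw [this]
  exact Set.Finite.biUnion (Finset.range (R+1)).finite_toSet
    (fun n _ => sphere_finite hT hlf o hdeg_in n)
section
open ENNReal SimpleGraph Finset

lemma walk_lb {X : Type*} {G : SimpleGraph X} (hT : G.IsTree)
    (hlf : ∀ x : X, (G.neighborSet x).Finite) (o : X) {p : ℝ} (hp : 1 < p)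
    (k : ℕ → ℕ) (hk_pos : ∀ n, 0 < k n) (hk_mono : Monotone k)
    (mu : ℕ → ℝ) (hmu_pos : ∀ n, 0 < mu n) (hmu_dec : Antitone mu)
    (m : X → ℝ) (hm : ∀ x, m x = mu (G.dist o x))
    (hdeg_out : ∀ x : X,
      (G.neighborSet x ∩ {y | G.dist o y = G.dist o x + 1}).ncard = k (G.dist o x))
    (hdeg_in : ∀ x : X, x ≠ o →
      (G.neighborSet x ∩ {y | G.dist o y + 1 = G.dist o x}).ncard = 1)
    (w : X → X → ℝ)
    (hw : ∀ x y, w x y =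
      min ((m x) ^ (1 / p) / ((G.neighborSet x).ncard : ℝ) ^ (1 / p))
          ((m y) ^ (1 / p) / ((G.neighborSet y).ncard : ℝ) ^ (1 / p)))
    (α : ℕ → ℝ)
    (hα : ∀ n, α n = (mu (n + 1)) ^ (1 / p) / ((k (n + 1) : ℝ) + 1) ^ (1 / p))
    (hαpos : ∀ n, 0 < α n)
    {x y : X} (q : G.Walk x y) :
    |∑ l ∈ Finset.range (G.dist o y), α l - ∑ l ∈ Finset.range (G.dist o x), α l|
      ≤ walkLength w q := by
  induction q with
  | nil => simp [walkLength_nil]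
  | @cons u v y' h q ih =>
    rw [walkLength_cons]
    have hedge : |(∑ l ∈ Finset.range (G.dist o v), α l)
        - ∑ l ∈ Finset.range (G.dist o u), α l| = w u v := by
      rcases tree_adj_level hT o h with hl | hl
      · rw [edge_weight hT hlf o hp k hk_pos hk_mono mu hmu_pos hmu_dec m hm hdeg_out
          hdeg_in w hw α hα u v h hl, hl, Finset.sum_range_succ]
        rw [add_sub_cancel_left, abs_of_pos (hαpos _)]
      · have hwsym : w u v = w v u := by rw [hw, hw, min_comm]
        rw [hwsym, edge_weight hT hlf o hp k hk_pos hk_mono mu hmu_pos hmu_dec m hm hdeg_out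
          hdeg_in w hw α hα v u h.symm hl, hl, Finset.sum_range_succ]
        rw [sub_add_cancel_left, abs_neg, abs_of_pos (hαpos _)]
    calc |(∑ l ∈ Finset.range (G.dist o y'), α l) - ∑ l ∈ Finset.range (G.dist o u), α l|
        ≤ |(∑ l ∈ Finset.range (G.dist o y'), α l) - ∑ l ∈ Finset.range (G.dist o v), α l|
          + |(∑ l ∈ Finset.range (G.dist o v), α l)
            - ∑ l ∈ Finset.range (G.dist o u), α l| := abs_sub_le _ _ _
      _ ≤ walkLength w q + w u v := add_le_add ih (le_of_eq hedge)
      _ = w u v + walkLength w q := add_comm _ _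

end

open Filter Topology in
/-- On a spherically symmetric tree with branching numbers `k` (increasing), spherically
symmetric decreasing measure `m`, and the `p`-intrinsic path metric induced by
`w(x,y) = min(m(x)^{1/p}/deg(x)^{1/p}, m(y)^{1/p}/deg(y)^{1/p})`, the Cauchy boundary is
nonempty iff `α(n) = m(n+1)^{1/p}/(k(n+1)+1)^{1/p}` is summable; in that case the
truncated distance to the boundary (truncation constant `D = ∑_{j≥1} α(j)`) of a vertex
at combinatorial distance `n ≥ 1` from the root equals `∑_{l=n}^∞ α(l)`. -/
theorem sphericallySymmetricTree_boundary_dist {X : Type*} [Countable X] [MetricSpace X]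
    (G : SimpleGraph X) (hT : G.IsTree) (hlf : ∀ x : X, (G.neighborSet x).Finite)
    (o : X) (p : ℝ) (hp : 1 < p)
    (k : ℕ → ℕ) (hk_pos : ∀ n, 0 < k n) (hk_mono : Monotone k)
    (mu : ℕ → ℝ) (hmu_pos : ∀ n, 0 < mu n) (hmu_dec : Antitone mu)
    (m : X → ℝ) (hm : ∀ x, m x = mu (G.dist o x))
    (hdeg_out : ∀ x : X,
      (G.neighborSet x ∩ {y | G.dist o y = G.dist o x + 1}).ncard = k (G.dist o x))
    (hdeg_in : ∀ x : X, x ≠ o →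
      (G.neighborSet x ∩ {y | G.dist o y + 1 = G.dist o x}).ncard = 1)
    (w : X → X → ℝ)
    (hw : ∀ x y, w x y =
      min ((m x) ^ (1 / p) / ((G.neighborSet x).ncard : ℝ) ^ (1 / p))
          ((m y) ^ (1 / p) / ((G.neighborSet y).ncard : ℝ) ^ (1 / p)))
    (hdist : ∀ x y : X, dist x y = sInf {L : ℝ | ∃ q : G.Walk x y, L = walkLength w q})
    (α : ℕ → ℝ)
    (hα : ∀ n, α n = (mu (n + 1)) ^ (1 / p) / ((k (n + 1) : ℝ) + 1) ^ (1 / p)) :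
    ((Set.range ((↑) : X → UniformSpace.Completion X))ᶜ.Nonempty ↔ Summable α) ∧
    (Summable α → ∀ x : X, x ≠ o →
      min (EMetric.infEdist (↑x : UniformSpace.Completion X)
            (Set.range ((↑) : X → UniformSpace.Completion X))ᶜ)
          (ENNReal.ofReal (∑' j : ℕ, α (j + 1))) =
        ENNReal.ofReal (∑' l : ℕ, α (G.dist o x + l))) := by
  classical
  have hconn := hT.isConnected
  set S : ℕ → ℝ := fun n => ∑ l ∈ Finset.range n, α l with hS
  have hαpos : ∀ n, 0 < α n := by
    intro n; rw [hα]
    exact div_pos (Real.rpow_pos_of_pos (hmu_pos _) _)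
      (Real.rpow_pos_of_pos (by positivity) _)
  have hS_mono : Monotone S := by
    intro a b hab
    exact Finset.sum_le_sum_of_subset_of_nonneg (Finset.range_subset_range.mpr hab)
      (fun i _ _ => (hαpos i).le)
  have hS_add : ∀ a b : ℕ, S (a + b) - S a = ∑ l ∈ Finset.range b, α (a + l) := by
    intro a b
    rw [hS]
    simp only [Finset.sum_range_add]
    ring
  have hw_nonneg : ∀ a b : X, 0 ≤ w a b := by
    intro a b; rw [hw]
    refine le_min (div_nonneg ?_ ?_) (div_nonneg ?_ ?_) <;>
      first
        | exact Real.rpow_nonneg (by rw [hm]; exact (hmu_pos _).le) _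
        | exact Real.rpow_nonneg (Nat.cast_nonneg _) _
  -- lower bound for distances
  have hlb : ∀ a b : X, |S (G.dist o b) - S (G.dist o a)| ≤ dist a b := by
    intro a b
    rw [hdist]
    refine le_csInf ⟨walkLength w (hconn.preconnected a b).some,
      (hconn.preconnected a b).some, rfl⟩ ?_
    rintro L ⟨q, rfl⟩
    exact walk_lb hT hlf o hp k hk_pos hk_mono mu hmu_pos hmu_dec m hm hdeg_out hdeg_in
      w hw α hα hαpos q
  -- upper bound along an edge
  have hub : ∀ a b : X, G.Adj a b → dist a b ≤ w a b := by
    intro a b hab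
    rw [hdist]
    refine csInf_le ⟨0, ?_⟩ ⟨Walk.cons hab Walk.nil, by
      simp [walkLength_cons, walkLength_nil]⟩
    rintro L ⟨q, rfl⟩; exact walkLength_nonneg hw_nonneg q
  -- children and the ray
  have hchild : ∀ a : X, ∃ b, G.Adj a b ∧ G.dist o b = G.dist o a + 1 := by
    intro a
    have h1 : (G.neighborSet a ∩ {y | G.dist o y = G.dist o a + 1}).Nonempty := by
      apply Set.nonempty_of_ncard_ne_zero
      rw [hdeg_out a]; exact (hk_pos _).ne'
    obtain ⟨b, hb1, hb2⟩ := h1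
    exact ⟨b, hb1, hb2⟩
  choose c hc1 hc2 using hchild
  have hlev : ∀ (a : X) (j : ℕ), G.dist o (c^[j] a) = G.dist o a + j := by
    intro a j
    induction j with
    | zero => simp
    | succ j ih => rw [Function.iterate_succ_apply', hc2, ih]; omega
  have hray_step : ∀ (a : X) (j : ℕ),
      dist (c^[j] a) (c^[j+1] a) ≤ α (G.dist o a + j) := by
    intro a j
    rw [Function.iterate_succ_apply']
    calc dist (c^[j] a) (c (c^[j] a)) ≤ w (c^[j] a) (c (c^[j] a)) := hub _ _ (hc1 _)
    _ = α (G.dist o (c^[j] a)) := edge_weight hT hlf o hp k hk_pos hk_mono mu hmu_pos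
        hmu_dec m hm hdeg_out hdeg_in w hw α hα _ _ (hc1 _) (hc2 _)
    _ = α (G.dist o a + j) := by rw [hlev]
  have hray_dist : ∀ (a : X) (j : ℕ),
      dist a (c^[j] a) ≤ S (G.dist o a + j) - S (G.dist o a) := by
    intro a j
    induction j with
    | zero => simp
    | succ j ih =>
      have hstep := hray_step a j
      have htri := dist_triangle a (c^[j] a) (c^[j+1] a)
      have hSs : S (G.dist o a + (j+1)) = S (G.dist o a + j) + α (G.dist o a + j) := by
        rw [hS, show G.dist o a + (j + 1) = (G.dist o a + j) + 1 by ring]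
        exact Finset.sum_range_succ _ _
      rw [hSs]
      linarith
  -- the escape lemma: sequences converging to boundary points leave every ball
  have escape : ∀ ξ : UniformSpace.Completion X,
      ξ ∉ Set.range ((↑) : X → UniformSpace.Completion X) →
      ∀ z : ℕ → X,
        Tendsto (fun j => ((z j : UniformSpace.Completion X))) atTop (𝓝 ξ) →
      ∀ R N : ℕ, ∃ j, N ≤ j ∧ R ≤ G.dist o (z j) := by
    intro ξ hξ z hz R N
    by_contra hcon
    push_neg at hcon
    have hfin : {a : X | G.dist o a ≤ R}.Finite := ball_finite hT hlf o hdeg_in R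
    haveI : Finite {a : X | G.dist o a ≤ R} := hfin.to_subtype
    set g : ℕ → {a : X | G.dist o a ≤ R} :=
      fun j => ⟨z (N + j), (hcon (N + j) (Nat.le_add_right _ _)).le⟩ with hg
    obtain ⟨b, hb⟩ := Finite.exists_infinite_fiber g
    have hinf : {j : ℕ | z j = (b : X)}.Infinite := by
      have h1 : (g ⁻¹' {b}).Infinite := Set.infinite_coe_iff.mp hb
      have h2 := h1.image (Set.injOn_of_injective (add_right_injective N))
      apply h2.mono
      rintro j ⟨i, hi, rfl⟩
      have : g i = b := hi
      simpa [hg] using congrArg Subtype.val this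
    have hfreq : ∃ᶠ j in atTop, ((z j : UniformSpace.Completion X))
        ∈ ({((b : X) : UniformSpace.Completion X)} : Set (UniformSpace.Completion X)) := by
      rw [Nat.frequently_atTop_iff_infinite]
      apply hinf.mono
      intro j hj
      simp only [Set.mem_setOf_eq] at hj ⊢
      rw [hj]; rfl
    have hmem := mem_closure_of_frequently_of_tendsto hfreq hz
    rw [closure_singleton] at hmem
    exact hξ (Set.mem_singleton_iff.mp hmem ▸ Set.mem_range_self _)
  -- boundary points at the end of rays
  have hBd : Summable α → ∀ a : X,
      ∃ ξ, ξ ∉ Set.range ((↑) : X → UniformSpace.Completion X) ∧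
        edist (↑a : UniformSpace.Completion X) ξ
          ≤ ENNReal.ofReal (∑' l : ℕ, α (G.dist o a + l)) := by
    intro hsum a
    have hsum' : Summable (fun j => α (G.dist o a + j)) := by
      have h1 := (summable_nat_add_iff (f := α) (G.dist o a)).mpr hsum
      refine h1.congr fun j => ?_
      rw [add_comm]
    have hcs : CauchySeq (fun j => c^[j] a) :=
      cauchySeq_of_dist_le_of_summable _ (hray_step a) hsum'
    have hcs2 : CauchySeq (fun j => ((c^[j] a : X) : UniformSpace.Completion X)) :=
      (UniformSpace.Completion.uniformContinuous_coe X).comp_cauchySeq hcs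
    obtain ⟨ξ, hξ⟩ := cauchySeq_tendsto_of_complete hcs2
    refine ⟨ξ, ?_, ?_⟩
    · rintro ⟨y, rfl⟩
      have hd0 : Tendsto (fun j => dist ((c^[j] a : X) : UniformSpace.Completion X)
          ((y : X) : UniformSpace.Completion X)) atTop (𝓝 0) :=
        tendsto_iff_dist_tendsto_zero.mp hξ
      have hev1 : ∀ᶠ j in atTop, dist ((c^[j] a : X) : UniformSpace.Completion X)
          ((y : X) : UniformSpace.Completion X) < α (G.dist o y) :=
        hd0.eventually (eventually_lt_nhds (hαpos _))
      have hev2 : ∀ᶠ j in atTop, α (G.dist o y)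
          ≤ dist ((c^[j] a : X) : UniformSpace.Completion X)
            ((y : X) : UniformSpace.Completion X) := by
        filter_upwards [eventually_ge_atTop (G.dist o y + 1)] with j hj
        rw [UniformSpace.Completion.dist_eq]
        have h1 := hlb (c^[j] a) y
        have h2 : S (G.dist o y) + α (G.dist o y) ≤ S (G.dist o (c^[j] a)) := by
          have h3 : S (G.dist o y + 1) ≤ S (G.dist o (c^[j] a)) := by
            apply hS_mono
            rw [hlev]
            omega
          have h4 : S (G.dist o y + 1) = S (G.dist o y) + α (G.dist o y) :=
            Finset.sum_range_succ _ _
          linarith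
        have h6 := neg_le_abs (S (G.dist o y) - S (G.dist o (c^[j] a)))
        linarith
      obtain ⟨j, hj1, hj2⟩ := (hev1.and hev2).exists
      linarith
    · refine le_of_tendsto (tendsto_const_nhds.edist hξ) ?_
      filter_upwards with j
      rw [edist_dist, UniformSpace.Completion.dist_eq]
      apply ENNReal.ofReal_le_ofReal
      calc dist a (c^[j] a) ≤ S (G.dist o a + j) - S (G.dist o a) := hray_dist a j
      _ = ∑ l ∈ Finset.range j, α (G.dist o a + l) := hS_add _ _
      _ ≤ ∑' l : ℕ, α (G.dist o a + l) :=
          Summable.sum_le_tsum _ (fun l _ => (hαpos _).le) hsum'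
  -- approximating sequences for completion points
  have happrox : ∀ ξ : UniformSpace.Completion X, ∃ z : ℕ → X,
      Tendsto (fun j => ((z j : UniformSpace.Completion X))) atTop (𝓝 ξ) := by
    intro ξ
    have h1 : ξ ∈ closure (Set.range ((↑) : X → UniformSpace.Completion X)) :=
      UniformSpace.Completion.denseRange_coe ξ
    obtain ⟨u, hu1, hu2⟩ := mem_closure_iff_seq_limit.mp h1
    choose z hz using hu1
    refine ⟨z, ?_⟩
    convert hu2 using 1
    funext j; rw [hz]
  constructor
  · constructor
    · rintro ⟨ξ, hξ⟩
      rw [Set.mem_compl_iff] at hξ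
      obtain ⟨z, hz⟩ := happrox ξ
      have hcs : CauchySeq (fun j => ((z j : UniformSpace.Completion X))) := hz.cauchySeq
      obtain ⟨R0, hR0pos, hR0⟩ := cauchySeq_bdd hcs
      have hC : ∀ j, dist o (z j) ≤ dist o (z 0) + R0 := by
        intro j
        have h1 := dist_triangle o (z 0) (z j)
        have h2 : dist (z 0) (z j) < R0 := by
          have h3 := hR0 0 j
          rwa [UniformSpace.Completion.dist_eq] at h3
        linarith
      apply summable_of_sum_range_le (fun i => (hαpos i).le)
      intro R
      obtain ⟨j, _, hj⟩ := escape ξ hξ z hz R 0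
      have h3 : S R ≤ S (G.dist o (z j)) := hS_mono hj
      have h4 : S (G.dist o (z j)) ≤ dist o (z j) := by
        have h5 := hlb o (z j)
        have h6 := le_abs_self (S (G.dist o (z j)) - S (G.dist o o))
        have h7 : G.dist o o = 0 := by simp
        have h8 : S 0 = 0 := by simp [hS]
        rw [h7, h8] at h5 h6
        linarith
      calc S R ≤ S (G.dist o (z j)) := h3
      _ ≤ dist o (z j) := h4
      _ ≤ dist o (z 0) + R0 := hC j
    · intro hsum
      obtain ⟨ξ, hξ, _⟩ := hBd hsum o
      exact ⟨ξ, Set.mem_compl hξ⟩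
  · intro hsum x hx
    have hn0 : G.dist o x ≠ 0 := fun h0 => hx (hconn.dist_eq_zero_iff.mp h0).symm
    set n := G.dist o x with hn
    have hSig : ∀ nn : ℕ, S nn + ∑' l : ℕ, α (nn + l) = ∑' l : ℕ, α l := by
      intro nn
      have h1 := Summable.sum_add_tsum_nat_add (f := α) nn hsum
      have h2 : (∑' l : ℕ, α (l + nn)) = ∑' l : ℕ, α (nn + l) :=
        tsum_congr fun l => by rw [add_comm]
      rw [← h2]
      exact h1
    have htail_le_D : (∑' l : ℕ, α (n + l)) ≤ ∑' j : ℕ, α (j + 1) := by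
      have e1 : (∑' j : ℕ, α (j + 1)) = ∑' j : ℕ, α (1 + j) :=
        tsum_congr fun j => by rw [add_comm]
      have h1 := hSig 1
      have h2 := hSig n
      have h3 : S 1 ≤ S n := hS_mono (Nat.one_le_iff_ne_zero.mpr hn0)
      rw [e1]
      linarith
    obtain ⟨ξx, hξx, hEx⟩ := hBd hsum x
    have hup : EMetric.infEdist (↑x : UniformSpace.Completion X)
        (Set.range ((↑) : X → UniformSpace.Completion X))ᶜ
        ≤ ENNReal.ofReal (∑' l : ℕ, α (n + l)) :=
      le_trans (EMetric.infEdist_le_edist_of_mem (Set.mem_compl hξx)) hEx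
    have hlow : ENNReal.ofReal (∑' l : ℕ, α (n + l))
        ≤ EMetric.infEdist (↑x : UniformSpace.Completion X)
          (Set.range ((↑) : X → UniformSpace.Completion X))ᶜ := by
      refine EMetric.le_infEdist.mpr ?_
      intro ξ hξ
      rw [Set.mem_compl_iff] at hξ
      obtain ⟨z, hz⟩ := happrox ξ
      have hreal : (∑' l : ℕ, α (n + l)) ≤ dist (↑x : UniformSpace.Completion X) ξ := by
        apply _root_.le_of_forall_pos_le_add
        intro ε hε
        have hS_tend : Tendsto S atTop (𝓝 (∑' l : ℕ, α l)) := hsum.hasSum.tendsto_sum_nat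
        have h1 : ∀ᶠ i in atTop, (∑' l : ℕ, α l) - ε/2 < S i :=
          hS_tend.eventually (eventually_gt_nhds (by linarith))
        obtain ⟨i, hi⟩ := h1.exists
        have hdt : Tendsto (fun j => dist ((z j : UniformSpace.Completion X)) ξ) atTop (𝓝 0) :=
          tendsto_iff_dist_tendsto_zero.mp hz
        have h2 : ∀ᶠ j in atTop, dist ((z j : UniformSpace.Completion X)) ξ < ε/2 :=
          hdt.eventually (eventually_lt_nhds (by linarith))
        obtain ⟨N, hN⟩ := eventually_atTop.mp h2
        obtain ⟨j, hjN, hjlev⟩ := escape ξ hξ z hz i N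
        have h3 : S i ≤ S (G.dist o (z j)) := hS_mono hjlev
        have h4 : S (G.dist o (z j)) - S n ≤ dist x (z j) := by
          have h5 := hlb x (z j)
          have h6 := le_abs_self (S (G.dist o (z j)) - S (G.dist o x))
          rw [← hn] at h5 h6
          linarith
        have h7 : dist x (z j) = dist (↑x : UniformSpace.Completion X) ((z j : X) : UniformSpace.Completion X) :=
          (UniformSpace.Completion.dist_eq _ _).symm
        have h8 := dist_triangle (↑x : UniformSpace.Completion X) ξ ((z j : X) : UniformSpace.Completion X)
        have h9 : dist ξ ((z j : X) : UniformSpace.Completion X) < ε/2 := by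
          have h9a := hN j hjN
          rw [UniformSpace.Completion.dist_comm] at h9a
          exact h9a
        have h10 := hSig n
        linarith
      rw [edist_dist]
      exact ENNReal.ofReal_le_ofReal hreal
    rw [le_antisymm hup hlow, min_eq_left (ENNReal.ofReal_le_ofReal htail_le_D)]
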